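/- Let F ⊆ K ⊆ L be a tower of fields, let d be a positive integer, and let v_1, …, v_d ∈ L be linearly independent over K. Let u be a positive integer with u ≤ d, let γ_1, …, γ_u ∈ K be pairwise distinct, and for i ∈ {1,…,u} define β_i = Σ_{j=1}^{u} γ_i^{j−1}·v_j ∈ L and the F-subspace V_i = β_i·K = { β_i·c : c ∈ K } of L (L regarded as an F-vector space). Then the family of F-subspaces V_1, …, V_u is independent: their sum V_1 + ⋯ + V_u is an internal direct sum (equivalently, for every i, V_i ∩ Σ_{j≠i} V_j = {0}). -/
import Mathlib


theorem stmt13 (F K L : Type*) [Field F] [Field K] [Field L]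
    [Algebra F K] [Algebra K L] [Algebra F L] [IsScalarTower F K L]
    (d : ℕ) (hd : 0 < d) (v : Fin d → L) (hv : LinearIndependent K v)
    (u : ℕ) (hu : 0 < u) (hud : u ≤ d)
    (γ : Fin u → K) (hγ : Function.Injective γ) :
    -- `V i = β_i · K` as an `F`-subspace of `L`, where
    -- `β_i = ∑_j γ_i^(j-1) • v_j`; the family `V` is independent.
    iSupIndep (fun i : Fin u =>
      LinearMap.range ((LinearMap.mulLeft F
          (∑ j : Fin u, γ i ^ (j : ℕ) • v (Fin.castLE hud j))).comp
        (IsScalarTower.toAlgHom F K L).toLinearMap)) := by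
  have hv' : LinearIndependent K (v ∘ Fin.castLE hud) :=
    hv.comp _ (Fin.castLE_injective hud)
  -- β is linearly independent over K
  have hβ : LinearIndependent K
      (fun i : Fin u => ∑ j : Fin u, γ i ^ (j : ℕ) • v (Fin.castLE hud j)) := by
    rw [Fintype.linearIndependent_iff]
    intro c hc
    have h0 : ∑ j : Fin u, (∑ i : Fin u, c i * γ i ^ (j : ℕ)) • (v ∘ Fin.castLE hud) j = 0 := by
      rw [← hc]
      simp only [Finset.smul_sum, smul_smul, Function.comp]
      rw [Finset.sum_comm]
      simp [Finset.sum_smul]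
    have hcoef := Fintype.linearIndependent_iff.mp hv' _ h0
    have hmv : (Matrix.vandermonde γ).transpose.mulVec c = 0 := by
      funext j
      simpa [Matrix.mulVec, dotProduct, Matrix.vandermonde, mul_comm] using hcoef j
    have hdet : (Matrix.vandermonde γ).transpose.det ≠ 0 := by
      rw [Matrix.det_transpose]
      exact Matrix.det_vandermonde_ne_zero_iff.mpr hγ
    have := Matrix.eq_zero_of_mulVec_eq_zero hdet hmv
    exact fun i => congrFun this i
  have hindep : iSupIndep fun i : Fin u =>
      Submodule.span K {∑ j : Fin u, γ i ^ (j : ℕ) • v (Fin.castLE hud j)} :=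
    hβ.iSupIndep_span_singleton
  -- each range coincides with the restriction of scalars of the K-span
  have hrange : ∀ i : Fin u, LinearMap.range ((LinearMap.mulLeft F
        (∑ j : Fin u, γ i ^ (j : ℕ) • v (Fin.castLE hud j))).comp
        (IsScalarTower.toAlgHom F K L).toLinearMap)
      = (Submodule.span K {∑ j : Fin u, γ i ^ (j : ℕ) • v (Fin.castLE hud j)}).restrictScalars F := by
    intro i
    ext x
    simp only [LinearMap.mem_range, LinearMap.coe_comp, Function.comp_apply,
      LinearMap.mulLeft_apply, Submodule.restrictScalars_mem, Submodule.mem_span_singleton,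
      AlgHom.toLinearMap_apply, IsScalarTower.coe_toAlgHom']
    constructor
    · rintro ⟨c, rfl⟩
      exact ⟨c, by rw [Algebra.smul_def, mul_comm]⟩
    · rintro ⟨c, rfl⟩
      exact ⟨c, by rw [Algebra.smul_def, mul_comm]⟩
  have hdisRS : ∀ p q : Submodule K L, Disjoint p q →
      Disjoint (p.restrictScalars F) (q.restrictScalars F) := by
    intro p q h
    rw [disjoint_iff] at h ⊢
    have hinf : (p ⊓ q).restrictScalars F = p.restrictScalars F ⊓ q.restrictScalars F := by
      ext x; simp
    rw [← hinf, h, Submodule.restrictScalars_bot]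
  intro i
  simp only [hrange]
  refine Disjoint.mono_right ?_ (hdisRS _ _ (hindep i))
  refine iSup₂_le fun j hj => ?_
  have hle := le_iSup₂ (f := fun j (_ : j ≠ i) =>
    Submodule.span K {∑ k : Fin u, γ j ^ (k : ℕ) • v (Fin.castLE hud k)}) j hj
  intro x hx
  exact hle hx
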